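/- There exist constants 0 < c ≤ C and r₀ > 1 such that for all r ≥ r₀, c·(log r)^((β+1)·n) ≤ V(r) ≤ C·(log r)^((β+1)·n). -/

import Mathlib

set_option maxHeartbeats 1000000

open Real

/-- The Euclidean radial volume integral (up to the constant volume of `S^(2n-1)`). -/
noncomputable def VFJ (n : ℕ) (α β : ℝ) (r : ℝ) : ℝ :=
  ∫ t in (0:ℝ)..r,
    ((α + Real.log (1 + t ^ 2)) ^ β / (α ^ β * (1 + t ^ 2))) *
      (((α + Real.log (1 + t ^ 2)) ^ (β + 1) - α ^ (β + 1)) / ((β + 1) * α ^ β * t ^ 2))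
        ^ (n - 1) * t ^ (2 * n - 1)

lemma VFJ_eq (m : ℕ) (α β : ℝ) (hβ : 0 ≤ β) (hα : 0 < α) (r : ℝ) :
    VFJ (m + 2) α β r = ((α + Real.log (1 + r ^ 2)) ^ (β + 1) - α ^ (β + 1)) ^ (m + 2) /
      (2 * (m + 2 : ℕ) * (β + 1) * α ^ β * ((β + 1) * α ^ β) ^ (m + 1)) := by
  set g : ℝ → ℝ := fun t => α + Real.log (1 + t ^ 2) with hgdef
  have hαβ' : (0:ℝ) < α ^ β := Real.rpow_pos_of_pos hα β
  have hβ1 : (0:ℝ) < β + 1 := by linarith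
  set K : ℝ := 2 * (m + 2 : ℕ) * (β + 1) * α ^ β * ((β + 1) * α ^ β) ^ (m + 1) with hKdef
  have hK : (0:ℝ) < K := by positivity
  have hgpos : ∀ t : ℝ, 0 < g t := by
    intro t
    have : (0:ℝ) ≤ Real.log (1 + t ^ 2) := Real.log_nonneg (by nlinarith)
    simp only [hgdef]; linarith
  have h1t : ∀ t : ℝ, (0:ℝ) < 1 + t ^ 2 := fun t => by positivity
  set φ : ℝ → ℝ := fun t =>
    g t ^ β * (g t ^ (β + 1) - α ^ (β + 1)) ^ (m + 1) * t /
      ((1 + t ^ 2) * α ^ β * ((β + 1) * α ^ β) ^ (m + 1)) with hφdef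
  -- continuity of φ
  have hgc : Continuous g := by
    apply continuous_const.add
    exact Continuous.log (by continuity) (fun t => (h1t t).ne')
  have hφc : Continuous φ := by
    apply Continuous.div
    · apply Continuous.mul
      · apply Continuous.mul
        · exact hgc.rpow_const (fun t => Or.inr hβ)
        · exact ((hgc.rpow_const (fun t => Or.inr (by linarith))).sub continuous_const).pow _
      · exact continuous_id
    · continuity
    · intro t
      have := h1t t
      positivity
  -- derivative
  have hderiv : ∀ t : ℝ, HasDerivAt (fun t => (g t ^ (β + 1) - α ^ (β + 1)) ^ (m + 2) / K) (φ t) t := by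
    intro t
    have h1 : HasDerivAt (fun t : ℝ => 1 + t ^ 2) (2 * t) t := by
      simpa using (hasDerivAt_pow 2 t).const_add 1
    have h2 : HasDerivAt (fun t : ℝ => Real.log (1 + t ^ 2)) (2 * t / (1 + t ^ 2)) t :=
      h1.log (h1t t).ne'
    have h3 : HasDerivAt g (2 * t / (1 + t ^ 2)) t := h2.const_add α
    have h4 : HasDerivAt (fun t => g t ^ (β + 1))
        (2 * t / (1 + t ^ 2) * (β + 1) * g t ^ (β + 1 - 1)) t :=
      h3.rpow_const (Or.inl (hgpos t).ne')
    have h5 := ((h4.sub_const (α ^ (β + 1))).pow (m + 2)).div_const K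
    refine h5.congr_deriv ?_
    have e2 : β + 1 - 1 = β := by ring
    have e3 : m + 2 - 1 = m + 1 := rfl
    rw [e2, e3]
    simp only [hφdef, hKdef]
    rw [mul_pow]
    field_simp [hαβ'.ne', hβ1.ne', (h1t t).ne', (hgpos t).ne']
  -- values at endpoints
  have hzero : (g 0 ^ (β + 1) - α ^ (β + 1)) ^ (m + 2) / K = 0 := by
    simp [hgdef]
  -- the integrand equals φ
  have heq : ∀ t : ℝ,
      ((α + Real.log (1 + t ^ 2)) ^ β / (α ^ β * (1 + t ^ 2))) *
        (((α + Real.log (1 + t ^ 2)) ^ (β + 1) - α ^ (β + 1)) / ((β + 1) * α ^ β * t ^ 2))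
          ^ (m + 2 - 1) * t ^ (2 * (m + 2) - 1) = φ t := by
    intro t
    have e3 : m + 2 - 1 = m + 1 := rfl
    have e4 : 2 * (m + 2) - 1 = 2 * m + 3 := by omega
    rw [e3, e4]
    rcases eq_or_ne t 0 with rfl | ht
    · simp [hφdef]
    · simp only [hφdef, ← hgdef]
      rw [div_pow, mul_pow, mul_pow]
      have ht2 : (t ^ 2) ^ (m + 1) ≠ 0 := by positivity
      field_simp [hαβ'.ne', hβ1.ne', (h1t t).ne', (hgpos t).ne', ht]
      ring
  have key : VFJ (m + 2) α β r = (g r ^ (β + 1) - α ^ (β + 1)) ^ (m + 2) / K - 0 := by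
    rw [← hzero, VFJ]
    rw [intervalIntegral.integral_congr (g := φ) (fun t _ => heq t)]
    exact intervalIntegral.integral_eq_sub_of_hasDerivAt (fun t _ => hderiv t)
      (hφc.intervalIntegrable 0 r)
  simpa [hKdef] using key

theorem stmt_15 (n : ℕ) (hn : 2 ≤ n) (α β : ℝ) (hβ : 0 ≤ β) (hαβ : β < α) :
    ∃ c C r₀ : ℝ, 0 < c ∧ c ≤ C ∧ 1 < r₀ ∧
      ∀ r : ℝ, r₀ ≤ r →
        c * (Real.log r) ^ ((β + 1) * n) ≤ VFJ n α β r ∧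
        VFJ n α β r ≤ C * (Real.log r) ^ ((β + 1) * n) := by
  obtain ⟨m, rfl⟩ : ∃ m, n = m + 2 := ⟨n - 2, by omega⟩
  have hα : 0 < α := lt_of_le_of_lt hβ hαβ
  have hβ1 : (0:ℝ) < β + 1 := by linarith
  have hαβ' : (0:ℝ) < α ^ β := Real.rpow_pos_of_pos hα β
  set K : ℝ := 2 * (m + 2 : ℕ) * (β + 1) * α ^ β * ((β + 1) * α ^ β) ^ (m + 1) with hKdef
  have hK : (0:ℝ) < K := by positivity
  refine ⟨1 / K, (4:ℝ) ^ ((β + 1) * (m + 2 : ℕ)) / K, Real.exp (α + 1), by positivity, ?_, ?_, ?_⟩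
  · exact div_le_div_of_nonneg_right (Real.one_le_rpow (by norm_num) (by positivity)) hK.le
  · simpa using Real.exp_lt_exp.mpr (by linarith : (0:ℝ) < α + 1)
  · intro r hr
    have hrpos : (0:ℝ) < r := lt_of_lt_of_le (Real.exp_pos _) hr
    have hL : α + 1 ≤ Real.log r := (Real.le_log_iff_exp_le hrpos).mpr hr
    have hL0 : 0 < Real.log r := by linarith
    set L := Real.log r with hLdef
    have hr1 : 1 < r := lt_of_lt_of_le (by simpa using Real.exp_lt_exp.mpr (by linarith : (0:ℝ) < α + 1)) hr
    -- bounds on g r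
    have hlog_low : 2 * L ≤ Real.log (1 + r ^ 2) := by
      have : Real.log (r ^ 2) ≤ Real.log (1 + r ^ 2) :=
        Real.log_le_log (by positivity) (by linarith)
      rw [Real.log_pow] at this; push_cast at this; linarith
    have hlog_up : Real.log (1 + r ^ 2) ≤ Real.log 2 + 2 * L := by
      have h1 : Real.log (1 + r ^ 2) ≤ Real.log (2 * r ^ 2) :=
        Real.log_le_log (by positivity) (by nlinarith)
      rw [Real.log_mul (by norm_num) (by positivity), Real.log_pow] at h1
      push_cast at h1; linarith
    have hlog2 : Real.log 2 ≤ 1 := by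
      have := Real.log_le_sub_one_of_pos (by norm_num : (0:ℝ) < 2); linarith
    set g : ℝ := α + Real.log (1 + r ^ 2) with hgdef
    have hglow : 2 * L ≤ g := by simp only [hgdef]; linarith
    have hgup : g ≤ 4 * L := by simp only [hgdef]; linarith
    have hg0 : 0 < g := by linarith
    set X : ℝ := g ^ (β + 1) - α ^ (β + 1) with hXdef
    -- lower bound on X
    have hXlow : L ^ (β + 1) ≤ X := by
      have h1 : ((2:ℝ) * L) ^ (β + 1) ≤ g ^ (β + 1) :=
        Real.rpow_le_rpow (by positivity) hglow (by linarith)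
      have h2 : ((2:ℝ) * L) ^ (β + 1) = 2 ^ (β + 1) * L ^ (β + 1) :=
        Real.mul_rpow (by norm_num) hL0.le
      have h3 : (2:ℝ) ≤ 2 ^ (β + 1) := by
        calc (2:ℝ) = 2 ^ (1:ℝ) := (Real.rpow_one 2).symm
        _ ≤ 2 ^ (β + 1) := Real.rpow_le_rpow_of_exponent_le (by norm_num) (by linarith)
      have h4 : α ^ (β + 1) ≤ L ^ (β + 1) :=
        Real.rpow_le_rpow hα.le (by linarith) (by linarith)
      have h5 : 0 ≤ L ^ (β + 1) := (Real.rpow_pos_of_pos hL0 _).le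
      nlinarith
    have hXup : X ≤ 4 ^ (β + 1) * L ^ (β + 1) := by
      have h1 : g ^ (β + 1) ≤ ((4:ℝ) * L) ^ (β + 1) :=
        Real.rpow_le_rpow hg0.le hgup (by linarith)
      have h2 : ((4:ℝ) * L) ^ (β + 1) = 4 ^ (β + 1) * L ^ (β + 1) :=
        Real.mul_rpow (by norm_num) hL0.le
      have h3 : 0 ≤ α ^ (β + 1) := (Real.rpow_pos_of_pos hα _).le
      linarith
    have hX0 : 0 ≤ X := le_trans (Real.rpow_pos_of_pos hL0 _).le hXlow
    have hrw : VFJ (m + 2) α β r = X ^ (m + 2) / K := by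
      rw [VFJ_eq m α β hβ hα r]
    have hLpow : (L ^ (β + 1)) ^ (m + 2) = L ^ ((β + 1) * (m + 2 : ℕ)) := by
      rw [← Real.rpow_natCast (L ^ (β + 1)) (m + 2), ← Real.rpow_mul hL0.le]
    constructor
    · rw [hrw]
      have h1 : (L ^ (β + 1)) ^ (m + 2) ≤ X ^ (m + 2) :=
        pow_le_pow_left₀ (Real.rpow_pos_of_pos hL0 _).le hXlow _
      rw [hLpow] at h1
      rw [one_div, inv_mul_eq_div]
      exact div_le_div_of_nonneg_right h1 hK.le
    · rw [hrw]
      have h1 : X ^ (m + 2) ≤ ((4:ℝ) ^ (β + 1) * L ^ (β + 1)) ^ (m + 2) :=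
        pow_le_pow_left₀ hX0 hXup _
      have h2 : ((4:ℝ) ^ (β + 1) * L ^ (β + 1)) ^ (m + 2)
          = (4:ℝ) ^ ((β + 1) * (m + 2 : ℕ)) * L ^ ((β + 1) * (m + 2 : ℕ)) := by
        rw [mul_pow, hLpow, ← Real.rpow_natCast ((4:ℝ) ^ (β + 1)) (m + 2),
          ← Real.rpow_mul (by norm_num)]
      rw [h2] at h1
      calc X ^ (m + 2) / K ≤ ((4:ℝ) ^ ((β + 1) * (m + 2 : ℕ)) * L ^ ((β + 1) * (m + 2 : ℕ))) / K :=
            div_le_div_of_nonneg_right h1 hK.le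
        _ = (4:ℝ) ^ ((β + 1) * (m + 2 : ℕ)) / K * L ^ ((β + 1) * (m + 2 : ℕ)) := by ring
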